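/- arXiv:1605.03382 — 4 statements merged into one kernel-verified Lean document; each statement's English description precedes it below -/
import Mathlib

section
/- Let V be a finite-dimensional real vector space, G a group, and ρ : G → GL(V) a linear representation. Let h ⊆ V be a ρ-invariant linear subspace and set N = {ξ ∈ V : ρ(g)ξ − ξ ∈ h for all g ∈ G} (a linear subspace of V containing h). If α and β are two G-invariant inner products on V, and P_α, P_β denote the orthogonal complements of N in V with respect to α and β respectively, then P_α + h = P_β + h; moreover P_α ∩ h = 0 and P_β ∩ h = 0, so both sums are direct. (This is the linear-algebraic content of Lemma 8 of the paper: for the adjoint representation of a compact connected subgroup H⁰ of a Lie group G on its Lie algebra g, the subspace N is the normalizer n(h) of the Lie algebra h of H⁰, and the conclusion reads p^α ⊕ h = p^β ⊕ h.) -/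
open LinearMap (BilinForm)

/-- Key auxiliary lemma: one inclusion. -/
theorem lemma8_aux {V : Type*} [AddCommGroup V] [Module ℝ V] [FiniteDimensional ℝ V]
    {G : Type*} [Group G] (ρ : G →* (V ≃ₗ[ℝ] V))
    (h : Submodule ℝ V) (hinv : ∀ (g : G), ∀ x ∈ h, ρ g x ∈ h)
    (N : Submodule ℝ V) (hN : ∀ ξ : V, ξ ∈ N ↔ ∀ g : G, ρ g ξ - ξ ∈ h)
    (α β : V →ₗ[ℝ] V →ₗ[ℝ] ℝ)
    (hαsymm : ∀ u v : V, α u v = α v u) (hαpos : ∀ v : V, v ≠ 0 → 0 < α v v)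
    (hβpos : ∀ v : V, v ≠ 0 → 0 < β v v)
    (hαG : ∀ (g : G) (u v : V), α (ρ g u) (ρ g v) = α u v)
    (hβG : ∀ (g : G) (u v : V), β (ρ g u) (ρ g v) = β u v)
    (Pα Pβ : Submodule ℝ V)
    (hPα : ∀ v : V, v ∈ Pα ↔ ∀ n ∈ N, α v n = 0)
    (hPβ : ∀ v : V, v ∈ Pβ ↔ ∀ n ∈ N, β v n = 0) :
    Pβ ≤ Pα ⊔ h := by
  -- basic consequences of positive definiteness
  have hmul : ∀ (a b : G) (x : V), ρ (a * b) x = ρ a (ρ b x) := by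
    intro a b x
    rw [map_mul]; rfl
  have hcan : ∀ (g : G) (x : V), ρ g (ρ g⁻¹ x) = x := by
    intro g x
    rw [← hmul, mul_inv_cancel]; simp
  have hα0 : ∀ v : V, α v v = 0 → v = 0 := by
    intro v hv
    by_contra hne
    exact absurd hv (ne_of_gt (hαpos v hne))
  have hβ0 : ∀ v : V, β v v = 0 → v = 0 := by
    intro v hv
    by_contra hne
    exact absurd hv (ne_of_gt (hβpos v hne))
  have hαrefl : (α : BilinForm ℝ V).IsRefl := fun x y hxy => by
    rw [hαsymm]; exact hxy
  -- N is invariant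
  have hNinv : ∀ (g : G), ∀ x ∈ N, ρ g x ∈ N := by
    intro g x hx
    rw [hN] at hx ⊢
    intro g'
    have h1 := hx (g' * g)
    have h2 := hx g
    have : ρ g' (ρ g x) - ρ g x = (ρ (g' * g) x - x) - (ρ g x - x) := by
      rw [hmul]; abel
    rw [this]
    exact sub_mem h1 h2
  -- h ≤ N
  have hhN : h ≤ N := by
    intro x hx
    rw [hN]
    intro g
    exact sub_mem (hinv g x hx) hx
  -- Pα is the α-orthogonal of N
  have hPα' : Pα = LinearMap.BilinForm.orthogonal α N := by
    ext v
    rw [LinearMap.BilinForm.mem_orthogonal_iff, hPα]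
    constructor
    · intro hv n hn
      show α n v = 0
      rw [hαsymm]; exact hv n hn
    · intro hv n hn
      rw [hαsymm]; exact hv n hn
  -- restrictions of α are nondegenerate
  have hrestr : ∀ W : Submodule ℝ V, (LinearMap.BilinForm.restrict α W).Nondegenerate := by
    intro W
    constructor <;> intro x hx
    all_goals
    have := hx x
    simp only [LinearMap.BilinForm.restrict_apply] at this
    exact Subtype.ext (hα0 _ this)
  -- complements
  have hcomplN : IsCompl N (LinearMap.BilinForm.orthogonal α N) :=
    LinearMap.BilinForm.isCompl_orthogonal_of_restrict_nondegenerate hαrefl (hrestr N)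
  have hcomplh : IsCompl h (LinearMap.BilinForm.orthogonal α h) :=
    LinearMap.BilinForm.isCompl_orthogonal_of_restrict_nondegenerate hαrefl (hrestr h)
  -- C := N ⊓ h^⊥
  set C : Submodule ℝ V := LinearMap.BilinForm.orthogonal α h ⊓ N with hC
  have hhC : h ⊔ C = N := by
    rw [hC, ← sup_inf_assoc_of_le _ hhN, hcomplh.sup_eq_top, top_inf_eq]
  -- C is pointwise fixed
  have hCorthinv : ∀ (g : G), ∀ c ∈ LinearMap.BilinForm.orthogonal α h,
      ρ g c ∈ LinearMap.BilinForm.orthogonal α h := by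
    intro g c hc x hx
    show α x (ρ g c) = 0
    have : α x (ρ g c) = α (ρ g⁻¹ x) c := by
      rw [← hαG g (ρ g⁻¹ x) c, hcan g x]
    rw [this]
    exact hc _ (hinv g⁻¹ x hx)
  have hCfix : ∀ (g : G), ∀ c ∈ C, ρ g c = c := by
    intro g c hc
    obtain ⟨hc1, hc2⟩ := hc
    have hd_h : ρ g c - c ∈ h := (hN c).mp hc2 g
    have hd_C : ρ g c - c ∈ LinearMap.BilinForm.orthogonal α h :=
      sub_mem (hCorthinv g c hc1) hc1
    have : α (ρ g c - c) (ρ g c - c) = 0 := by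
      rw [hαsymm]
      exact hd_C _ hd_h
    exact sub_eq_zero.mp (hα0 _ this)
  -- Pβ is invariant
  have hPβinv : ∀ (g : G), ∀ v ∈ Pβ, ρ g v ∈ Pβ := by
    intro g v hv
    rw [hPβ]
    intro n hn
    have heq : β (ρ g v) n = β v (ρ g⁻¹ n) := by
      rw [← hβG g v (ρ g⁻¹ n), hcan g n]
    rw [heq]
    exact (hPβ v).mp hv _ (hNinv g⁻¹ n hn)
  -- key step: every element of Pβ is α-orthogonal to C
  have hβnd : (LinearMap.BilinForm.restrict β Pβ).Nondegenerate := by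
    constructor <;> intro x hx
    all_goals
    have := hx x
    simp only [LinearMap.BilinForm.restrict_apply] at this
    exact Subtype.ext (hβ0 _ this)
  have hkey : ∀ v ∈ Pβ, ∀ c ∈ C, α v c = 0 := by
    intro v hv c hc
    set φ : Pβ →ₗ[ℝ] ℝ := (α.flip c).comp Pβ.subtype with hφ
    set w : Pβ := ((LinearMap.BilinForm.restrict β Pβ).toDual hβnd).symm φ with hwdef
    have hrep : ∀ y : Pβ, β (w : V) (y : V) = α (y : V) c := by
      intro y
      have := LinearMap.BilinForm.apply_toDual_symm_apply (hB := hβnd) φ y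
      simpa [hφ, LinearMap.BilinForm.restrict_apply] using this
    have hwfix : ∀ g : G, ρ g (w : V) = (w : V) := by
      intro g
      have hz : ρ g (w : V) - (w : V) ∈ Pβ := sub_mem (hPβinv g _ w.2) w.2
      have hzero : ∀ y ∈ Pβ, β (ρ g (w : V) - (w : V)) y = 0 := by
        intro y hy
        have h1 : β (ρ g (w : V)) y = β (w : V) (ρ g⁻¹ y) := by
          rw [← hβG g (w : V) (ρ g⁻¹ y), hcan g y]
        have hy' : ρ g⁻¹ y ∈ Pβ := hPβinv g⁻¹ y hy
        have h2 : β (w : V) (ρ g⁻¹ y) = α (ρ g⁻¹ y) c := hrep ⟨ρ g⁻¹ y, hy'⟩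
        have hcfix : ρ g⁻¹ c = c := hCfix g⁻¹ c hc
        have h3 : α (ρ g⁻¹ y) c = α y c := by
          calc α (ρ g⁻¹ y) c = α (ρ g⁻¹ y) (ρ g⁻¹ c) := by rw [hcfix]
            _ = α y c := hαG g⁻¹ y c
        have h4 : β (w : V) y = α y c := hrep ⟨y, hy⟩
        have : β (ρ g (w : V) - (w : V)) y
            = β (ρ g (w : V)) y - β (w : V) y := by
          rw [map_sub, LinearMap.sub_apply]
        rw [this, h1, h2, h3, h4, sub_self]
      have hz0 : β (ρ g (w : V) - (w : V)) (ρ g (w : V) - (w : V)) = 0 :=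
        hzero _ hz
      exact sub_eq_zero.mp (hβ0 _ hz0)
    have hwN : (w : V) ∈ N := by
      rw [hN]
      intro g
      rw [hwfix g, sub_self]
      exact zero_mem h
    have hw0 : (w : V) = 0 := by
      apply hβ0
      exact (hPβ _).mp w.2 _ hwN
    have := hrep ⟨v, hv⟩
    rw [hw0] at this
    simp at this
    exact this.symm
  -- conclude
  intro v hv
  have hvtop : v ∈ N ⊔ (LinearMap.BilinForm.orthogonal α N) := by
    rw [hcomplN.sup_eq_top]; trivial
  obtain ⟨n, hn, p, hp, rfl⟩ := Submodule.mem_sup.mp hvtop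
  have hnN : n ∈ h ⊔ C := by rw [hhC]; exact hn
  obtain ⟨a, ha, c, hc, rfl⟩ := Submodule.mem_sup.mp hnN
  have hpPα : p ∈ Pα := by rw [hPα']; exact hp
  have h1 : α (a + c + p) c = 0 := hkey _ hv c hc
  have h2 : α a c = 0 := hc.1 a ha
  have h3 : α p c = 0 := (hPα p).mp hpPα c hc.2
  have hcc : α c c = 0 := by
    have : α (a + c + p) c = α a c + α c c + α p c := by
      simp [map_add, LinearMap.add_apply]
    rw [this, h2, h3] at h1
    linarith
  have hc0 : c = 0 := hα0 c hcc
  apply Submodule.mem_sup.mpr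
  exact ⟨p, hpPα, a, ha, by rw [hc0]; abel⟩

/-- Linear-algebraic content of Lemma 8: if `h` is an invariant subspace,
`N = {ξ | ρ(g)ξ - ξ ∈ h for all g}`, and `Pα`, `Pβ` are the orthogonal complements
of `N` with respect to two `G`-invariant inner products, then
`Pα + h = Pβ + h` and both sums are direct. -/
theorem stmt_0 {V : Type*} [AddCommGroup V] [Module ℝ V] [FiniteDimensional ℝ V]
    {G : Type*} [Group G] (ρ : G →* (V ≃ₗ[ℝ] V))
    (h : Submodule ℝ V) (hinv : ∀ (g : G), ∀ x ∈ h, ρ g x ∈ h)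
    (N : Submodule ℝ V) (hN : ∀ ξ : V, ξ ∈ N ↔ ∀ g : G, ρ g ξ - ξ ∈ h)
    (α β : V →ₗ[ℝ] V →ₗ[ℝ] ℝ)
    (hαsymm : ∀ u v : V, α u v = α v u) (hαpos : ∀ v : V, v ≠ 0 → 0 < α v v)
    (hβsymm : ∀ u v : V, β u v = β v u) (hβpos : ∀ v : V, v ≠ 0 → 0 < β v v)
    (hαG : ∀ (g : G) (u v : V), α (ρ g u) (ρ g v) = α u v)
    (hβG : ∀ (g : G) (u v : V), β (ρ g u) (ρ g v) = β u v)
    (Pα Pβ : Submodule ℝ V)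
    (hPα : ∀ v : V, v ∈ Pα ↔ ∀ n ∈ N, α v n = 0)
    (hPβ : ∀ v : V, v ∈ Pβ ↔ ∀ n ∈ N, β v n = 0) :
    Pα ⊔ h = Pβ ⊔ h ∧ Pα ⊓ h = ⊥ ∧ Pβ ⊓ h = ⊥ := by
  have hhN : h ≤ N := by
    intro x hx
    rw [hN]
    intro g
    exact sub_mem (hinv g x hx) hx
  have hdisj : ∀ (γ : V →ₗ[ℝ] V →ₗ[ℝ] ℝ), (∀ v : V, v ≠ 0 → 0 < γ v v) →
      ∀ (P : Submodule ℝ V), (∀ v : V, v ∈ P ↔ ∀ n ∈ N, γ v n = 0) → P ⊓ h = ⊥ := by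
    intro γ hγpos P hP
    rw [eq_bot_iff]
    rintro x ⟨hx1, hx2⟩
    have : γ x x = 0 := (hP x).mp hx1 x (hhN hx2)
    by_contra hne
    simp only [Submodule.mem_bot] at hne
    exact absurd this (ne_of_gt (hγpos x hne))
  refine ⟨?_, hdisj α hαpos Pα hPα, hdisj β hβpos Pβ hPβ⟩
  apply le_antisymm
  · exact sup_le (lemma8_aux ρ h hinv N hN β α hβsymm hβpos hαpos hβG hαG Pβ Pα hPβ hPα)
      le_sup_right
  · exact sup_le (lemma8_aux ρ h hinv N hN α β hαsymm hαpos hβpos hαG hβG Pα Pβ hPα hPβ)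
      le_sup_right
end

section
/- Let V be a finite-dimensional real vector space, G a group, and ρ : G → GL(V) a linear representation. Let W = {v ∈ V : ρ(g)v = v for all g ∈ G} be the subspace of G-fixed vectors. If α and β are two G-invariant inner products on V, then the orthogonal complement of W with respect to α equals the orthogonal complement of W with respect to β. -/
open LinearMap in
theorem aux_ortho_eq_span {V : Type*} [AddCommGroup V] [Module ℝ V] [FiniteDimensional ℝ V]
    {G : Type*} [Group G] (ρ : G →* (V ≃ₗ[ℝ] V))
    (W : Submodule ℝ V) (hW : ∀ v : V, v ∈ W ↔ ∀ g : G, ρ g v = v)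
    (α : V →ₗ[ℝ] V →ₗ[ℝ] ℝ)
    (hαsymm : ∀ u v : V, α u v = α v u) (hαpos : ∀ v : V, v ≠ 0 → 0 < α v v)
    (hαG : ∀ (g : G) (u v : V), α (ρ g u) (ρ g v) = α u v) :
    {v : V | ∀ w ∈ W, α v w = 0}
      = ↑(Submodule.span ℝ {x : V | ∃ (g : G) (v : V), ρ g v - v = x}) := by
  have hrefl : LinearMap.IsRefl α := fun u v h => by rw [hαsymm]; exact h
  have hnd : LinearMap.BilinForm.Nondegenerate α := hrefl.nondegenerate_iff_separatingLeft.mpr fun v h => by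
    by_contra hv
    exact (hαpos v hv).ne' (h v)
  set W' := Submodule.span ℝ {x : V | ∃ (g : G) (v : V), ρ g v - v = x} with hW'
  -- generators of W' are orthogonal to W
  have hgen : ∀ n ∈ W', ∀ w ∈ W, α n w = 0 := by
    intro n hn w hw
    induction hn using Submodule.span_induction with
    | mem x hx =>
        obtain ⟨g, v, rfl⟩ := hx
        have hfix : ρ g w = w := (hW w).1 hw g
        have := hαG g v w
        rw [hfix] at this
        simp [this]
    | zero => simp
    | add x y _ _ hx hy => simp [hx, hy]
    | smul c x _ hx => simp [hx]
  have h1 : LinearMap.BilinForm.orthogonal α W' = W := by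
    ext u
    rw [LinearMap.BilinForm.mem_orthogonal_iff]
    constructor
    · intro h
      rw [hW]
      intro g
      have key : ∀ v : V, α v (ρ g u - u) = 0 := by
        intro v
        have h1 : α (ρ g⁻¹ v) u - α v u = 0 := by
          have := h _ (Submodule.subset_span ⟨g⁻¹, v, rfl⟩)
          simpa [LinearMap.BilinForm.IsOrtho, map_sub, LinearMap.sub_apply] using this
        have hcan : ρ g⁻¹ (ρ g u) = u := by
          rw [map_inv]
          exact (ρ g).symm_apply_apply u
        have h2 : α v (ρ g u) = α (ρ g⁻¹ v) u := by
          have := hαG g⁻¹ v (ρ g u)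
          rw [hcan] at this
          exact this.symm
        rw [map_sub, h2]
        exact h1
      have := key (ρ g u - u)
      by_contra hne
      have hne' : ρ g u - u ≠ 0 := sub_ne_zero.mpr hne
      exact (hαpos _ hne').ne' this
    · intro hu n hn
      exact hgen n hn u hu
  have h2 : LinearMap.BilinForm.orthogonal α W = W' := by
    conv_lhs => rw [← h1]
    exact LinearMap.BilinForm.orthogonal_orthogonal hnd hrefl W'
  rw [← h2]
  ext v
  simp only [Set.mem_setOf_eq, SetLike.mem_coe, LinearMap.BilinForm.mem_orthogonal_iff]
  constructor
  · intro h n hn; rw [hαsymm]; exact h n hn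
  · intro h w hw; rw [hαsymm]; exact h w hw

/-- If `W` is the subspace of `G`-fixed vectors of a representation, then the
orthogonal complements of `W` with respect to any two `G`-invariant inner
products coincide. -/
theorem stmt_1 {V : Type*} [AddCommGroup V] [Module ℝ V] [FiniteDimensional ℝ V]
    {G : Type*} [Group G] (ρ : G →* (V ≃ₗ[ℝ] V))
    (W : Submodule ℝ V) (hW : ∀ v : V, v ∈ W ↔ ∀ g : G, ρ g v = v)
    (α β : V →ₗ[ℝ] V →ₗ[ℝ] ℝ)
    (hαsymm : ∀ u v : V, α u v = α v u) (hαpos : ∀ v : V, v ≠ 0 → 0 < α v v)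
    (hβsymm : ∀ u v : V, β u v = β v u) (hβpos : ∀ v : V, v ≠ 0 → 0 < β v v)
    (hαG : ∀ (g : G) (u v : V), α (ρ g u) (ρ g v) = α u v)
    (hβG : ∀ (g : G) (u v : V), β (ρ g u) (ρ g v) = β u v) :
    {v : V | ∀ w ∈ W, α v w = 0} = {v : V | ∀ w ∈ W, β v w = 0} := by
  rw [aux_ortho_eq_span ρ W hW α hαsymm hαpos hαG,
      aux_ortho_eq_span ρ W hW β hβsymm hβpos hβG]
end

section
/- Let g be a finite-dimensional real Lie algebra equipped with an inner product ⟨·,·⟩ that is invariant, i.e., ⟨[x,y],z⟩ + ⟨y,[x,z]⟩ = 0 for all x,y,z ∈ g. Then for every Lie subalgebra h ⊆ g, the normalizer n(h) = {x ∈ g : [x,y] ∈ h for all y ∈ h} satisfies n(h) = z_g(h) + h, where z_g(h) = {x ∈ g : [x,y] = 0 for all y ∈ h} is the centralizer of h in g. (This identity is used in the proof of Proposition 6 of the paper, where it is phrased as n(h) = ĝ + h for the compact Lie algebra g, with ĝ the centralizer of h.) -/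
/-- For a real Lie algebra with an invariant inner product, the normalizer of a
Lie subalgebra `h` equals the centralizer of `h` plus `h`. -/
theorem stmt_6 {g : Type*} [LieRing g] [LieAlgebra ℝ g] [Module.Finite ℝ g]
    (B : g →ₗ[ℝ] g →ₗ[ℝ] ℝ)
    (hsymm : ∀ x y : g, B x y = B y x) (hpos : ∀ x : g, x ≠ 0 → 0 < B x x)
    (hinv : ∀ x y z : g, B ⁅x, y⁆ z = - B y ⁅x, z⁆)
    (h : LieSubalgebra ℝ g) :
    ∀ x : g, (∀ y ∈ h, ⁅x, y⁆ ∈ h) ↔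
      ∃ z w : g, (∀ y ∈ h, ⁅z, y⁆ = 0) ∧ w ∈ h ∧ x = z + w := by
  have hrefl : B.IsRefl := fun x y hxy => by rw [hsymm]; exact hxy
  have hBzero : ∀ v : g, B v v = 0 → v = 0 := by
    intro v hv
    by_contra hne
    exact (hpos v hne).ne' hv
  set W : Submodule ℝ g := h.toSubmodule with hW
  have hnd : (LinearMap.BilinForm.restrict B W).Nondegenerate := by
    constructor
    all_goals
      intro ⟨v, hv⟩ hvz
      have := hvz ⟨v, hv⟩
      simp only [LinearMap.BilinForm.restrict_apply] at this
      have hv0 : v = 0 := hBzero v this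
      exact Subtype.ext hv0
  have hcompl := LinearMap.BilinForm.isCompl_orthogonal_of_restrict_nondegenerate hrefl hnd
  intro x
  constructor
  · intro hx
    -- decompose x = w + z with w ∈ W, z ∈ orthogonal
    have hxtop : x ∈ W ⊔ LinearMap.BilinForm.orthogonal B W := by rw [hcompl.sup_eq_top]; trivial
    obtain ⟨w, hw, z, hz, hwz⟩ := Submodule.mem_sup.mp hxtop
    refine ⟨z, w, ?_, hw, by rw [← hwz]; abel⟩
    intro y hy
    -- [z, y] ∈ h
    have hzy_mem : ⁅z, y⁆ ∈ h := by
      have h1 : ⁅x, y⁆ ∈ h := hx y hy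
      have h2 : ⁅w, y⁆ ∈ h := h.lie_mem hw hy
      have : ⁅z, y⁆ = ⁅x, y⁆ - ⁅w, y⁆ := by rw [← hwz]; simp [add_lie]
      rw [this]; exact h.sub_mem h1 h2
    -- [z, y] ⊥ h
    have hzy_orth : ∀ u ∈ h, B ⁅z, y⁆ u = 0 := by
      intro u hu
      have : ⁅z, y⁆ = -⁅y, z⁆ := by rw [lie_skew]
      rw [this, map_neg, LinearMap.neg_apply, hinv y z u]
      have hyu : ⁅y, u⁆ ∈ h := h.lie_mem hy hu
      have := hz ⁅y, u⁆ hyu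
      rw [hsymm z ⁅y, u⁆, this]
      ring
    have := hzy_orth ⁅z, y⁆ hzy_mem
    exact hBzero _ this
  · rintro ⟨z, w, hzc, hwh, rfl⟩
    intro y hy
    have : ⁅z + w, y⁆ = ⁅z, y⁆ + ⁅w, y⁆ := add_lie z w y
    rw [this, hzc y hy, zero_add]
    exact h.lie_mem hwh hy
end

section
/- Let G be a topological group and H ⊆ G a compact subgroup having only finitely many connected components. Let g ∈ G be an element such that g H g⁻¹ ⊆ H and such that g H g⁻¹ is an open subset of H in the subspace topology of H. Then g H g⁻¹ = H. (This fact is used in the proof of Proposition 6 of the paper: conjugation by g is a homeomorphism of H onto the open subgroup g H g⁻¹, so both have the same finite number of connected components, each being a coset of the identity component H⁰, which forces equality.) -/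
open Set

/-- If `H` is a compact subgroup of a topological group with finitely many
connected components and `g H g⁻¹` is an open subgroup of `H`, then
`g H g⁻¹ = H`. -/
theorem stmt_7 {G : Type*} [Group G] [TopologicalSpace G] [IsTopologicalGroup G]
    (H : Subgroup G) (hcomp : IsCompact (H : Set G))
    (hfin : Finite (ConnectedComponents H))
    (g : G)
    (hsub : (fun x => g * x * g⁻¹) '' (H : Set G) ⊆ (H : Set G))
    (hopen : IsOpen {x : H | (x : G) ∈ (fun x => g * x * g⁻¹) '' (H : Set G)}) :
    (fun x => g * x * g⁻¹) '' (H : Set G) = (H : Set G) := by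
  set S' : Set G := (fun x => g * x * g⁻¹) '' (H : Set G) with hS'
  -- the conjugation homeomorphism of G
  let c : G ≃ₜ G := (Homeomorph.mulLeft g).trans (Homeomorph.mulRight g⁻¹)
  have hc : ∀ x : G, c x = g * x * g⁻¹ := fun x => rfl
  have hcA : c '' (H : Set G) = S' := rfl
  -- the preimage subgroup inside H
  let K : Subgroup H :=
    { carrier := {x : H | (x : G) ∈ S'}
      one_mem' := ⟨1, H.one_mem, by simp⟩
      mul_mem' := by
        rintro a b ⟨x, hx, hxe⟩ ⟨y, hy, hye⟩
        exact ⟨x * y, H.mul_mem hx hy, by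
          simp only at hxe hye ⊢
          push_cast
          rw [← hxe, ← hye]; group⟩
      inv_mem' := by
        rintro a ⟨x, hx, hxe⟩
        exact ⟨x⁻¹, H.inv_mem hx, by
          simp only at hxe ⊢
          rw [show ((a⁻¹ : H) : G) = ((a : G))⁻¹ from rfl, ← hxe]; group⟩ }
  have hKopen : IsOpen (K : Set H) := hopen
  have hKclosed : IsClosed (K : Set H) := K.isClosed_of_isOpen hKopen
  have hKclopen : IsClopen (K : Set H) := ⟨hKclosed, hKopen⟩
  -- the conjugation map as a self-map of H
  have hφmem : ∀ x : H, g * (x : G) * g⁻¹ ∈ H := fun x => hsub ⟨x, x.2, rfl⟩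
  let φ : H → H := fun x => ⟨g * (x : G) * g⁻¹, hφmem x⟩
  have hφcont : Continuous φ := by
    apply Continuous.subtype_mk
    fun_prop
  have hφK : ∀ x : H, φ x ∈ K := fun x => ⟨x, x.2, rfl⟩
  -- key: images of connected components
  have key : ∀ x : H, (Subtype.val '' connectedComponent (φ x) : Set G)
      = c '' (Subtype.val '' connectedComponent x) := by
    intro x
    have h1 : (Subtype.val '' connectedComponent (φ x) : Set G)
        = connectedComponentIn (H : Set G) ((φ x : H) : G) := by
      rw [connectedComponentIn_eq_image (φ x).2]; rfl
    have h2 : (Subtype.val '' connectedComponent x : Set G)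
        = connectedComponentIn (H : Set G) (x : G) := by
      rw [connectedComponentIn_eq_image x.2]; rfl
    rw [h1, h2, Homeomorph.image_connectedComponentIn c x.2, hcA]
    show connectedComponentIn (H : Set G) ((φ x : H) : G)
        = connectedComponentIn S' ((φ x : H) : G)
    -- component of φ x in H is contained in S' since K is clopen
    have hsubS : connectedComponentIn (H : Set G) ((φ x : H) : G) ⊆ S' := by
      rw [connectedComponentIn_eq_image (φ x).2]
      have := hKclopen.connectedComponent_subset (hφK x)
      intro y ⟨z, hz, hze⟩
      have : z ∈ (K : Set H) := this hz
      rw [← hze]; exact this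
    apply Subset.antisymm
    · exact isPreconnected_connectedComponentIn.subset_connectedComponentIn
        (mem_connectedComponentIn (φ x).2) hsubS
    · exact connectedComponentIn_mono ((φ x : H) : G) hsub
  -- the induced map on connected components
  let F : ConnectedComponents H → ConnectedComponents H :=
    (ConnectedComponents.continuous_coe.comp hφcont).connectedComponentsLift
  have hF : ∀ x : H, F (ConnectedComponents.mk x) = ConnectedComponents.mk (φ x) :=
    fun x => Continuous.connectedComponentsLift_apply_coe _ x
  have hFinj : Function.Injective F := by
    intro a b hab
    obtain ⟨x, rfl⟩ := ConnectedComponents.surjective_coe a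
    obtain ⟨y, rfl⟩ := ConnectedComponents.surjective_coe b
    rw [hF, hF, ConnectedComponents.coe_eq_coe] at hab
    have : c '' (Subtype.val '' connectedComponent x)
        = c '' (Subtype.val '' connectedComponent y) := by
      rw [← key, ← key, hab]
    have h2 : (Subtype.val '' connectedComponent x : Set G)
        = Subtype.val '' connectedComponent y := c.injective.image_injective this
    have : (y : G) ∈ (Subtype.val '' connectedComponent x : Set G) := by
      rw [h2]; exact ⟨y, mem_connectedComponent, rfl⟩
    obtain ⟨z, hz, hze⟩ := this
    have : z = y := Subtype.ext hze
    rw [ConnectedComponents.coe_eq_coe]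
    exact connectedComponent_eq (this ▸ hz)
  have hFsurj : Function.Surjective F := Finite.surjective_of_injective hFinj
  -- conclude S' = H
  apply Subset.antisymm hsub
  intro z hz
  by_contra hzS
  obtain ⟨a, ha⟩ := hFsurj (ConnectedComponents.mk ⟨z, hz⟩)
  obtain ⟨x, rfl⟩ := ConnectedComponents.surjective_coe a
  rw [hF, ConnectedComponents.coe_eq_coe] at ha
  have : (⟨z, hz⟩ : H) ∈ connectedComponent (φ x) := by
    rw [ha]; exact mem_connectedComponent
  have : (⟨z, hz⟩ : H) ∈ (K : Set H) := hKclopen.connectedComponent_subset (hφK x) this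
  exact hzS this
end
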